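/- Fix an integer k ≥ 2. There exists a constant C > 0 (independent of n) such that for all sufficiently large n, there exist an integer N with N ≤ n + C·k²·(log₂ k)·(log₂ n), an injective encoding map Enc : {0,1}^n → {0,1}^N, and a decoding map Dec defined on all binary strings, such that for every message s ∈ {0,1}^n and every binary string s' obtainable from Enc(s) by a combination of insertions and deletions totaling at most k, one has Dec(s') = s. -/

import Mathlib

/-- `Subseq k x` is the set of all subsequences of `x` obtained by deleting exactly `k` symbols,
i.e. all subsequences of `x` of length `|x| - k`. -/
def Subseq {α : Type*} (k : ℕ) (x : List α) : Set (List α) :=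
  {y | y.Sublist x ∧ y.length + k = x.length}

/-- `s'` is obtainable from `x` by a combination of insertions and deletions totaling at most `k`:
there is a string `z` that is a subsequence of both `x` and `s'` with
`(|x| - |z|) + (|s'| - |z|) ≤ k`. -/
def InsDel {α : Type*} (k : ℕ) (x s' : List α) : Prop :=
  ∃ z : List α, z.Sublist x ∧ z.Sublist s' ∧
    (x.length - z.length) + (s'.length - z.length) ≤ k


lemma exists_common_sublist {α : Type*} : ∀ (w u v : List α), u.Sublist w → v.Sublist w →
    ∃ t : List α, t.Sublist u ∧ t.Sublist v ∧ u.length + v.length ≤ t.length + w.length := by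
  intro w
  induction w with
  | nil =>
    intro u v hu hv
    rw [List.sublist_nil] at hu hv
    subst hu; subst hv
    exact ⟨[], by simp, by simp, by simp⟩
  | cons a w ih =>
    intro u v hu hv
    rw [List.sublist_cons_iff] at hu hv
    rcases hu with hu | ⟨u', rfl, hu'⟩
    · rcases hv with hv | ⟨v', rfl, hv'⟩
      · obtain ⟨t, h1, h2, h3⟩ := ih u v hu hv
        exact ⟨t, h1, h2, by simp; omega⟩
      · obtain ⟨t, h1, h2, h3⟩ := ih u v' hu hv'
        exact ⟨t, h1, h2.trans (List.sublist_cons_self a v'), by simp; omega⟩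
    · rcases hv with hv | ⟨v', rfl, hv'⟩
      · obtain ⟨t, h1, h2, h3⟩ := ih u' v hu' hv
        exact ⟨t, h1.trans (List.sublist_cons_self a u'), h2, by simp; omega⟩
      · obtain ⟨t, h1, h2, h3⟩ := ih u' v' hu' hv'
        exact ⟨a :: t, h1.cons₂ a, h2.cons₂ a, by simp; omega⟩

lemma insDel_refl {α : Type*} (k : ℕ) (x : List α) : InsDel k x x :=
  ⟨x, List.Sublist.refl x, List.Sublist.refl x, by simp⟩

lemma insDel_symm {α : Type*} {k : ℕ} {x y : List α} (h : InsDel k x y) : InsDel k y x := by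
  obtain ⟨z, h1, h2, h3⟩ := h
  exact ⟨z, h2, h1, by omega⟩

lemma insDel_two {k : ℕ} {x₁ x₂ s' : List Bool} (h1 : InsDel k x₁ s') (h2 : InsDel k x₂ s') :
    InsDel (2 * k) x₁ x₂ := by
  obtain ⟨z₁, hz1x, hz1s, hb1⟩ := h1
  obtain ⟨z₂, hz2x, hz2s, hb2⟩ := h2
  obtain ⟨t, ht1, ht2, htl⟩ := exists_common_sublist s' z₁ z₂ hz1s hz2s
  refine ⟨t, ht1.trans hz1x, ht2.trans hz2x, ?_⟩
  have := hz1x.length_le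
  have := hz2x.length_le
  have := hz1s.length_le
  have := hz2s.length_le
  have := ht1.length_le
  have := ht2.length_le
  omega


def mask : List Bool → List Bool → List Bool
  | _, [] => []
  | [], _ => []
  | a :: x, true :: m => a :: mask x m
  | _ :: x, false :: m => mask x m

def merge : List Bool → List Bool → List Bool → List Bool
  | [], _, _ => []
  | true :: m, c :: z, b => c :: merge m z b
  | true :: m, [], b => merge m [] b
  | false :: m, z, c :: b => c :: merge m z b
  | false :: m, z, [] => merge m z []

lemma mask_exists {z x : List Bool} (h : z.Sublist x) :
    ∃ m : List Bool, m.length = x.length ∧ m.count false + z.length = x.length ∧ mask x m = z := by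
  induction h with
  | slnil => exact ⟨[], by simp, by simp, by simp [mask]⟩
  | cons a h ih =>
    obtain ⟨m, h1, h2, h3⟩ := ih
    exact ⟨false :: m, by simp [h1], by simp [List.count_cons]; omega, by simp [mask, h3]⟩
  | cons_cons a h ih =>
    obtain ⟨m, h1, h2, h3⟩ := ih
    exact ⟨true :: m, by simp [h1], by simp [List.count_cons]; omega, by simp [mask, h3]⟩

lemma merge_exists {z y : List Bool} (h : z.Sublist y) :
    ∃ m b : List Bool, m.length = y.length ∧ m.count false + z.length = y.length ∧
      b.length + z.length = y.length ∧ merge m z b = y := by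
  induction h with
  | slnil => exact ⟨[], [], by simp, by simp, by simp, by simp [merge]⟩
  | @cons l₁ l₂ a h ih =>
    obtain ⟨m, b, h1, h2, h3, h4⟩ := ih
    exact ⟨false :: m, a :: b, by simp [h1], by simp [List.count_cons]; omega,
      by simp; omega, by simp [merge, h4]⟩
  | @cons_cons l₁ l₂ a h ih =>
    obtain ⟨m, b, h1, h2, h3, h4⟩ := ih
    exact ⟨true :: m, b, by simp [h1], by simp [List.count_cons]; omega,
      by simp; omega, by simp [merge, h4]⟩


def boolLists : ℕ → Finset (List Bool)
  | 0 => {[]}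
  | n + 1 => (boolLists n).image (true :: ·) ∪ (boolLists n).image (false :: ·)

lemma mem_boolLists {n : ℕ} {l : List Bool} : l ∈ boolLists n ↔ l.length = n := by
  induction n generalizing l with
  | zero => simp [boolLists]
  | succ n ih =>
    simp only [boolLists, Finset.mem_union, Finset.mem_image]
    constructor
    · rintro (⟨a, ha, rfl⟩ | ⟨a, ha, rfl⟩) <;> simp [ih.mp ha]
    · intro hl
      match l with
      | true :: l => exact Or.inl ⟨l, ih.mpr (by simpa using hl), rfl⟩
      | false :: l => exact Or.inr ⟨l, ih.mpr (by simpa using hl), rfl⟩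

lemma card_boolLists (n : ℕ) : (boolLists n).card = 2 ^ n := by
  induction n with
  | zero => simp [boolLists]
  | succ n ih =>
    rw [boolLists, Finset.card_union_of_disjoint, Finset.card_image_of_injective _
        (fun a b h => by simpa using h), Finset.card_image_of_injective _
        (fun a b h => by simpa using h), ih]
    · ring
    · rw [Finset.disjoint_left]
      rintro l hl hl'
      simp only [Finset.mem_image] at hl hl'
      obtain ⟨a, _, rfl⟩ := hl
      obtain ⟨b, _, hb⟩ := hl'
      simp at hb

open Classical in
lemma card_masks_le : ∀ (n j : ℕ),
    ((boolLists n).filter (fun m => m.count false ≤ j)).card ≤ (n + 1) ^ j := by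
  intro n
  induction n with
  | zero =>
    intro j
    calc ((boolLists 0).filter _).card ≤ (boolLists 0).card := Finset.card_filter_le _ _
    _ = 1 := by simp [boolLists]
    _ ≤ (0 + 1) ^ j := by simp
  | succ n ih =>
    intro j
    rw [boolLists, Finset.filter_union, Finset.filter_image, Finset.filter_image]
    have h1 : ((boolLists n).filter (fun a => (true :: a).count false ≤ j)).card
        ≤ (n + 1) ^ j := by
      refine le_trans (Finset.card_le_card ?_) (ih j)
      intro m hm
      simp only [Finset.mem_filter, List.count_cons] at hm ⊢
      refine ⟨hm.1, ?_⟩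
      have := hm.2
      simp at this ⊢
      omega
    have h2 : ((boolLists n).filter (fun a => (false :: a).count false ≤ j)).card
        ≤ (n + 1) ^ (j - 1) ∧
        (j = 0 → ((boolLists n).filter (fun a => (false :: a).count false ≤ j)).card = 0) := by
      constructor
      · refine le_trans (Finset.card_le_card ?_) (ih (j - 1))
        intro m hm
        simp only [Finset.mem_filter, List.count_cons] at hm ⊢
        refine ⟨hm.1, ?_⟩
        have := hm.2
        simp at this ⊢
        omega
      · rintro rfl
        rw [Finset.card_eq_zero, Finset.filter_eq_empty_iff]
        intro m _
        simp [List.count_cons]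
    calc _ ≤ (((boolLists n).filter (fun a => (true :: a).count false ≤ j)).image
              (true :: ·)).card +
            (((boolLists n).filter (fun a => (false :: a).count false ≤ j)).image
              (false :: ·)).card := Finset.card_union_le _ _
      _ ≤ ((boolLists n).filter (fun a => (true :: a).count false ≤ j)).card +
            ((boolLists n).filter (fun a => (false :: a).count false ≤ j)).card :=
          add_le_add Finset.card_image_le Finset.card_image_le
      _ ≤ (n + 1 + 1) ^ j := by
          rcases Nat.eq_zero_or_pos j with rfl | hj
          · rw [h2.2 rfl]
            simpa using h1
          · obtain ⟨i, rfl⟩ : ∃ i, j = i + 1 := ⟨j - 1, by omega⟩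
            have h3 := h2.1
            simp only [Nat.add_sub_cancel] at h3
            calc _ ≤ (n + 1) ^ (i + 1) + (n + 1) ^ i := add_le_add h1 h3
              _ = (n + 2) * (n + 1) ^ i := by ring
              _ ≤ (n + 2) * (n + 2) ^ i := by
                  gcongr
                  omega
              _ = (n + 1 + 1) ^ (i + 1) := by ring


open Classical in
lemma greedy {α : Type*} [DecidableEq α] (A : Finset α) (R : α → α → Prop)
    (hsym : ∀ x y, R x y → R y x) (hrefl : ∀ x, R x x) (B : ℕ) (hB : 1 ≤ B)
    (hball : ∀ x ∈ A, (A.filter (R x)).card ≤ B) :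
    ∀ m : ℕ, m * B ≤ A.card →
    ∃ T : Finset α, T ⊆ A ∧ T.card = m ∧ ∀ x ∈ T, ∀ y ∈ T, x ≠ y → ¬ R x y := by
  intro m
  induction m with
  | zero => exact fun _ => ⟨∅, by simp⟩
  | succ m ih =>
    intro hm
    obtain ⟨T, hTA, hTc, hTp⟩ := ih (by nlinarith)
    set U := T.biUnion (fun x => A.filter (R x)) with hU
    have hUcard : U.card < A.card := by
      calc U.card ≤ ∑ x ∈ T, (A.filter (R x)).card := Finset.card_biUnion_le
        _ ≤ ∑ _x ∈ T, B := Finset.sum_le_sum (fun x hx => hball x (hTA hx))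
        _ = m * B := by rw [Finset.sum_const, hTc, smul_eq_mul]
        _ < (m + 1) * B := by nlinarith
        _ ≤ A.card := hm
    obtain ⟨a, haA, haU⟩ : ∃ a ∈ A, a ∉ U := by
      by_contra h
      push_neg at h
      exact absurd (Finset.card_le_card h) (by omega)
    have haT : a ∉ T := fun haT =>
      haU (Finset.mem_biUnion.mpr ⟨a, haT, Finset.mem_filter.mpr ⟨haA, hrefl a⟩⟩)
    refine ⟨insert a T, ?_, ?_, ?_⟩
    · exact Finset.insert_subset haA hTA
    · rw [Finset.card_insert_of_notMem haT, hTc]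
    · intro x hx y hy hxy hR
      rcases Finset.mem_insert.mp hx with hxa | hx2
      · subst hxa
        rcases Finset.mem_insert.mp hy with hya | hy2
        · exact hxy hya.symm
        · exact haU (Finset.mem_biUnion.mpr ⟨y, hy2, Finset.mem_filter.mpr ⟨haA, hsym _ _ hR⟩⟩)
      · rcases Finset.mem_insert.mp hy with hya | hy2
        · subst hya
          exact haU (Finset.mem_biUnion.mpr ⟨x, hx2, Finset.mem_filter.mpr ⟨haA, hR⟩⟩)
        · exact hTp x hx2 y hy2 hxy hR

lemma sum_two_pow_le (k : ℕ) : ∑ i ∈ Finset.range (k + 1), 2 ^ i ≤ 2 ^ (k + 1) := by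
  induction k with
  | zero => simp
  | succ k ih =>
    rw [Finset.sum_range_succ]
    calc _ ≤ 2 ^ (k + 1) + 2 ^ (k + 1) := by omega
      _ = 2 ^ (k + 1 + 1) := by ring

open Classical in
lemma ball_card_le (k N : ℕ) (x : List Bool) (hx : x.length = N) :
    ((boolLists N).filter (fun y => InsDel (2 * k) x y)).card
      ≤ (N + 1) ^ k * (N + 1) ^ k * 2 ^ (k + 1) := by
  set Mk := (boolLists N).filter (fun m => m.count false ≤ k) with hMk
  set Sk := (Finset.range (k + 1)).biUnion boolLists with hSk
  set D := (Mk ×ˢ Mk) ×ˢ Sk with hD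
  have hsub : (boolLists N).filter (fun y => InsDel (2 * k) x y)
      ⊆ D.image (fun p => merge p.1.2 (mask x p.1.1) p.2) := by
    intro y hy
    obtain ⟨hyN, z, hz1, hz2, hb⟩ : y ∈ boolLists N ∧ ∃ z : List Bool, z.Sublist x ∧ z.Sublist y ∧
        x.length - z.length + (y.length - z.length) ≤ 2 * k := by
      exact Finset.mem_filter.mp hy
    rw [mem_boolLists] at hyN
    have hzx := hz1.length_le
    have hzy := hz2.length_le
    have hzk : N - z.length ≤ k := by omega
    obtain ⟨m₁, hm₁l, hm₁c, hm₁⟩ := mask_exists hz1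
    obtain ⟨m₂, b, hm₂l, hm₂c, hbl, hm₂⟩ := merge_exists hz2
    have hmem1 : m₁ ∈ Mk := Finset.mem_filter.mpr ⟨mem_boolLists.mpr (by omega), by omega⟩
    have hmem2 : m₂ ∈ Mk := Finset.mem_filter.mpr ⟨mem_boolLists.mpr (by omega), by omega⟩
    have hmem3 : b ∈ Sk := Finset.mem_biUnion.mpr ⟨b.length, Finset.mem_range.mpr (by omega),
      mem_boolLists.mpr rfl⟩
    exact Finset.mem_image.mpr ⟨((m₁, m₂), b),
      Finset.mem_product.mpr ⟨Finset.mem_product.mpr ⟨hmem1, hmem2⟩, hmem3⟩,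
      by simp only [hm₁, hm₂]⟩
  calc _ ≤ (D.image (fun p => merge p.1.2 (mask x p.1.1) p.2)).card := Finset.card_le_card hsub
    _ ≤ D.card := Finset.card_image_le
    _ = Mk.card * Mk.card * Sk.card := by
        rw [hD, Finset.card_product, Finset.card_product]
    _ ≤ (N + 1) ^ k * (N + 1) ^ k * 2 ^ (k + 1) := by
        have hS : Sk.card ≤ 2 ^ (k + 1) := by
          calc Sk.card ≤ ∑ i ∈ Finset.range (k + 1), (boolLists i).card :=
              Finset.card_biUnion_le
            _ = ∑ i ∈ Finset.range (k + 1), 2 ^ i := by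
                exact Finset.sum_congr rfl (fun i _ => card_boolLists i)
            _ ≤ 2 ^ (k + 1) := sum_two_pow_le k
        exact Nat.mul_le_mul (Nat.mul_le_mul (card_masks_le N k) (card_masks_le N k)) hS

theorem stmt_1 (k : ℕ) (hk : 2 ≤ k) :
    ∃ C : ℝ, 0 < C ∧ ∃ n₀ : ℕ, ∀ n : ℕ, n₀ ≤ n →
      ∃ N : ℕ, (N : ℝ) ≤ (n : ℝ) + C * (k : ℝ) ^ 2 * Real.logb 2 k * Real.logb 2 n ∧
        ∃ Enc Dec : List Bool → List Bool,
          (∀ s : List Bool, s.length = n → (Enc s).length = N) ∧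
          (∀ s₁ s₂ : List Bool, s₁.length = n → s₂.length = n → Enc s₁ = Enc s₂ → s₁ = s₂) ∧
          (∀ s : List Bool, s.length = n → ∀ s' : List Bool, InsDel k (Enc s) s' →
            Dec s' = s) := by
  classical
  refine ⟨100, by norm_num, 30 * k, fun n hn => ?_⟩
  have hn60 : 60 ≤ n := by omega
  set L := Nat.log 2 n with hLdef
  have hL1 : 1 ≤ L := Nat.log_pos one_lt_two (by omega)
  have hLn : L ≤ n := Nat.log_le_self 2 n
  set r := 10 * k * (L + 1) with hrdef
  set N := n + r with hNdef
  refine ⟨N, ?_, ?_⟩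
  · -- real inequality
    have hlogk : (1 : ℝ) ≤ Real.logb 2 k := by
      rw [show (1 : ℝ) = Real.logb 2 2 from (Real.logb_self_eq_one one_lt_two).symm]
      exact Real.logb_le_logb_of_le one_lt_two (by norm_num) (by exact_mod_cast hk)
    have hlogn : (L : ℝ) ≤ Real.logb 2 n := by
      have := Real.natLog_le_logb n 2
      exact_mod_cast this
    have hL1' : (1 : ℝ) ≤ (L : ℝ) := by exact_mod_cast hL1
    have hk' : (2 : ℝ) ≤ (k : ℝ) := by exact_mod_cast hk
    have hlogn0 : (1 : ℝ) ≤ Real.logb 2 n := le_trans hL1' hlogn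
    push_cast [hNdef, hrdef]
    have key : (10 : ℝ) * k * (L + 1) ≤ 100 * (k : ℝ) ^ 2 * Real.logb 2 k * Real.logb 2 n := by
      have h1 : (10 : ℝ) * k * (L + 1) ≤ 20 * k * L := by nlinarith
      have h2 : (20 : ℝ) * k * L ≤ 100 * k ^ 2 * Real.logb 2 k * Real.logb 2 n := by
        nlinarith [mul_le_mul hlogk hlogn (by linarith) (by linarith : (0:ℝ) ≤ Real.logb 2 k),
          sq_nonneg ((k : ℝ) - 2)]
      linarith
    linarith
  · -- construction
    have h2L : n < 2 ^ (L + 1) := Nat.lt_pow_succ_log_self one_lt_two n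
    have hNn2 : N + 1 ≤ n ^ 2 := by
      rw [hNdef, hrdef]
      nlinarith [hLn, hn, hL1]
    set LN := Nat.log 2 N with hLNdef
    have hLN : LN ≤ 2 * L + 1 := by
      have hNlt : N < 2 ^ (2 * L + 2) := by
        calc N < n ^ 2 := by omega
          _ ≤ (2 ^ (L + 1)) ^ 2 := Nat.pow_le_pow_left (by omega) 2
          _ = 2 ^ (2 * L + 2) := by rw [← pow_mul]; ring_nf
      have := Nat.log_lt_of_lt_pow (show N ≠ 0 by omega) hNlt
      omega
    have hN2 : N + 1 ≤ 2 ^ (LN + 1) := Nat.lt_pow_succ_log_self one_lt_two N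
    set B := (N + 1) ^ k * (N + 1) ^ k * 2 ^ (k + 1) with hBdef
    have hB1 : 1 ≤ B := by
      have : 0 < B := by rw [hBdef]; positivity
      omega
    have hBr : B ≤ 2 ^ r := by
      have h1 : (N + 1) ^ k ≤ 2 ^ ((LN + 1) * k) := by
        rw [pow_mul]
        exact Nat.pow_le_pow_left hN2 k
      calc B ≤ 2 ^ ((LN + 1) * k) * 2 ^ ((LN + 1) * k) * 2 ^ (k + 1) := by
            exact Nat.mul_le_mul (Nat.mul_le_mul h1 h1) le_rfl
        _ = 2 ^ ((LN + 1) * k + (LN + 1) * k + (k + 1)) := by rw [← pow_add, ← pow_add]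
        _ ≤ 2 ^ r := Nat.pow_le_pow_right (by omega) (by
            have : LN ≤ 2 * L + 1 := hLN
            rw [hrdef]
            nlinarith)
    have hball : ∀ x ∈ boolLists N,
        ((boolLists N).filter (fun y => InsDel (2 * k) x y)).card ≤ B := by
      intro x hx
      rw [hBdef]
      exact ball_card_le k N x (mem_boolLists.mp hx)
    obtain ⟨T, hTA, hTc, hTp⟩ := greedy (boolLists N) (InsDel (2 * k))
      (fun x y h => insDel_symm h) (insDel_refl (2 * k)) B hB1 hball (2 ^ n)
      (by rw [card_boolLists, hNdef, pow_add]
          exact Nat.mul_le_mul le_rfl hBr)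
    have hcard : Fintype.card {x // x ∈ boolLists n} = Fintype.card {x // x ∈ T} := by
      rw [Fintype.card_coe, Fintype.card_coe, card_boolLists, hTc]
    set e := Fintype.equivOfCardEq hcard with hedef
    set Enc : List Bool → List Bool :=
      fun s => if h : s ∈ boolLists n then (e ⟨s, h⟩ : {x // x ∈ T}).val else [] with hEnc
    have hEncval : ∀ (s : List Bool) (h : s ∈ boolLists n), Enc s = (e ⟨s, h⟩).val := by
      intro s h
      rw [hEnc]
      simp only
      rw [dif_pos h]
    have hEncT : ∀ (s : List Bool), s ∈ boolLists n → Enc s ∈ T := by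
      intro s h
      rw [hEncval s h]
      exact (e ⟨s, h⟩).2
    have hEncInj : ∀ s₁ s₂ : List Bool, s₁ ∈ boolLists n → s₂ ∈ boolLists n →
        Enc s₁ = Enc s₂ → s₁ = s₂ := by
      intro s₁ s₂ h1 h2 heq
      rw [hEncval s₁ h1, hEncval s₂ h2] at heq
      have := e.injective (Subtype.ext heq)
      exact congrArg Subtype.val this
    refine ⟨Enc, fun s' => if h : ∃ s, s ∈ boolLists n ∧ InsDel k (Enc s) s'
        then h.choose else [], ?_, ?_, ?_⟩
    · intro s hs
      have h := mem_boolLists.mpr hs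
      rw [hEncval s h]
      exact mem_boolLists.mp (hTA (e ⟨s, h⟩).2)
    · intro s₁ s₂ h1 h2 heq
      exact hEncInj s₁ s₂ (mem_boolLists.mpr h1) (mem_boolLists.mpr h2) heq
    · intro s hs s' hins
      have hsmem := mem_boolLists.mpr hs
      have hex : ∃ s₀, s₀ ∈ boolLists n ∧ InsDel k (Enc s₀) s' := ⟨s, hsmem, hins⟩
      beta_reduce
      rw [dif_pos hex]
      obtain ⟨hc1, hc2⟩ := hex.choose_spec
      by_contra hne
      have hEncne : Enc hex.choose ≠ Enc s := fun h => hne (hEncInj _ _ hc1 hsmem h)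
      exact hTp (Enc hex.choose) (hEncT _ hc1) (Enc s) (hEncT _ hsmem) hEncne
        (insDel_two hc2 hins)
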